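/- Let n ≥ 1 and let x_{ij} (for i, j ∈ {1,…,n}, i ≠ j) be coefficients of bid functions b_i(v_{-i}) = x_{ii} + Σ_{j≠i} x_{ij}·v_j satisfying: there exist constants c_j > 1 such that for all i ≠ j, x_{ij}·c_j + Σ_{t ≠ i, t ≠ j} x_{it} = 1, and such that c_i > Σ_{j ≠ i} x_{ij} for all i (which follows from the preceding condition). Then for any choice of the free terms x_{11}, …, x_{nn} there is a unique vector (v_1, …, v_n) ∈ ℝⁿ with b_i(v_{-i}) = v_i for all i. -/

import Mathlib

open Finset

/-- Homogeneous solutions are zero. -/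
lemma aux_hom (n : ℕ) (c : Fin n → ℝ) (hc : ∀ j, 1 < c j)
    (x : Fin n → Fin n → ℝ)
    (hcond : ∀ i j, i ≠ j →
      x i j * c j + ∑ t ∈ (Finset.univ.erase i).erase j, x i t = 1)
    (v : Fin n → ℝ)
    (hv : ∀ i, ∑ j ∈ Finset.univ.erase i, x i j * v j = v i) :
    v = 0 := by
  set b : Fin n → ℝ := fun j => (c j - 1)⁻¹ with hbdef
  have hbpos : ∀ j, 0 < b j := fun j => inv_pos.2 (by linarith [hc j])
  set B : ℝ := ∑ j, b j with hBdef
  have hBnn : 0 ≤ B := Finset.sum_nonneg fun j _ => (hbpos j).le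
  set S : Fin n → ℝ := fun i => ∑ t ∈ Finset.univ.erase i, x i t with hSdef
  have hx : ∀ i j, i ≠ j → x i j = (1 - S i) * b j := by
    intro i j hij
    have h1 := hcond i j hij
    have hjmem : j ∈ Finset.univ.erase i := by simp [Ne.symm hij]
    have h2 : x i j + ∑ t ∈ (Finset.univ.erase i).erase j, x i t = S i :=
      Finset.add_sum_erase _ _ hjmem
    have hcj : c j - 1 ≠ 0 := by have := hc j; linarith
    have : x i j * (c j - 1) = 1 - S i := by linarith
    show x i j = (1 - S i) * (c j - 1)⁻¹; rw [eq_mul_inv_iff_mul_eq₀ hcj]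
    linarith [this]
  have hBe : ∀ i, ∑ j ∈ Finset.univ.erase i, b j = B - b i := by
    intro i
    rw [hBdef, Finset.sum_erase_eq_sub (Finset.mem_univ i)]
  have hS : ∀ i, (1 - S i) * (1 + B - b i) = 1 := by
    intro i
    have : S i = (1 - S i) * (B - b i) := by
      calc S i = ∑ t ∈ Finset.univ.erase i, x i t := rfl
        _ = ∑ t ∈ Finset.univ.erase i, (1 - S i) * b t := by
            apply Finset.sum_congr rfl
            intro t ht
            exact hx i t (Ne.symm (Finset.ne_of_mem_erase ht))
        _ = (1 - S i) * ∑ t ∈ Finset.univ.erase i, b t := by rw [Finset.mul_sum]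
        _ = (1 - S i) * (B - b i) := by rw [hBe i]
    linarith [this]
  set s : ℝ := ∑ j, b j * v j with hsdef
  have key : ∀ i, v i * (1 + B) = s := by
    intro i
    have h1 : v i = (1 - S i) * (s - b i * v i) := by
      calc v i = ∑ j ∈ Finset.univ.erase i, x i j * v j := (hv i).symm
        _ = ∑ j ∈ Finset.univ.erase i, (1 - S i) * (b j * v j) := by
            apply Finset.sum_congr rfl
            intro j hj
            rw [hx i j (Ne.symm (Finset.ne_of_mem_erase hj))]; ring
        _ = (1 - S i) * ∑ j ∈ Finset.univ.erase i, b j * v j := by rw [Finset.mul_sum]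
        _ = (1 - S i) * (s - b i * v i) := by
            rw [hsdef, Finset.sum_erase_eq_sub (Finset.mem_univ i)]
    have h2 := hS i
    linear_combination (1 + B - b i) * h1 + (s - b i * v i) * h2
  have hs0 : s = 0 := by
    have : s * (1 + B) = B * s := by
      calc s * (1 + B) = ∑ j, b j * v j * (1 + B) := by
            rw [hsdef, ← Finset.sum_mul]
        _ = ∑ j, b j * s := by
            apply Finset.sum_congr rfl
            intro j _
            rw [mul_assoc, key j]
        _ = B * s := by rw [← Finset.sum_mul]
    linarith [this]
  funext i
  have := key i
  rw [hs0] at this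
  have h1B : (0:ℝ) < 1 + B := by linarith
  have hvi : v i = 0 := by
    rcases mul_eq_zero.mp this with h | h
    · exact h
    · exact absurd h h1B.ne'
  simpa using hvi

/-- Lemma 5.3: under the coefficient condition (5.11) with constants `c j > 1` and
`c i > ∑_{j ≠ i} x i j`, the fixed-point system
`v i = x i i + ∑_{j ≠ i} x i j * v j` has a unique solution. -/
theorem stmt_6 (n : ℕ) (hn : 1 ≤ n) (c : Fin n → ℝ) (hc : ∀ j, 1 < c j)
    (x : Fin n → Fin n → ℝ)
    (hcond : ∀ i j, i ≠ j →
      x i j * c j + ∑ t ∈ (Finset.univ.erase i).erase j, x i t = 1)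
    (hsum : ∀ i, ∑ j ∈ Finset.univ.erase i, x i j < c i) :
    ∃! v : Fin n → ℝ,
      ∀ i, x i i + ∑ j ∈ Finset.univ.erase i, x i j * v j = v i := by
  -- the linear map v ↦ (v i - ∑_{j≠i} x i j v j)
  let f : (Fin n → ℝ) →ₗ[ℝ] (Fin n → ℝ) :=
    { toFun := fun v i => v i - ∑ j ∈ Finset.univ.erase i, x i j * v j
      map_add' := by
        intro v w
        funext i
        simp only [Pi.add_apply]
        rw [show (∑ j ∈ Finset.univ.erase i, x i j * (v j + w j))
          = (∑ j ∈ Finset.univ.erase i, x i j * v j)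
            + ∑ j ∈ Finset.univ.erase i, x i j * w j by
            rw [← Finset.sum_add_distrib]; apply Finset.sum_congr rfl; intros; ring]
        ring
      map_smul' := by
        intro a v
        funext i
        simp only [Pi.smul_apply, smul_eq_mul, RingHom.id_apply]
        rw [show (∑ j ∈ Finset.univ.erase i, x i j * (a * v j))
          = a * ∑ j ∈ Finset.univ.erase i, x i j * v j by
            rw [Finset.mul_sum]; apply Finset.sum_congr rfl; intros; ring]
        ring }
  have hinj : Function.Injective f := by
    rw [injective_iff_map_eq_zero]
    intro v hv0
    apply aux_hom n c hc x hcond v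
    intro i
    have := congrFun hv0 i
    simp only [f, LinearMap.coe_mk, AddHom.coe_mk, Pi.zero_apply] at this
    linarith
  have hsurj : Function.Surjective f := (LinearMap.injective_iff_surjective).mp hinj
  obtain ⟨v, hv⟩ := hsurj (fun i => x i i)
  refine ⟨v, ?_, ?_⟩
  · intro i
    have := congrFun hv i
    simp only [f, LinearMap.coe_mk, AddHom.coe_mk] at this
    linarith
  · intro w hw
    have : w - v = 0 := by
      apply aux_hom n c hc x hcond
      intro i
      have h1 := hw i
      have h2 : x i i + ∑ j ∈ Finset.univ.erase i, x i j * v j = v i := by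
        have := congrFun hv i
        simp only [f, LinearMap.coe_mk, AddHom.coe_mk] at this
        linarith
      simp only [Pi.sub_apply]
      rw [show (∑ j ∈ Finset.univ.erase i, x i j * (w j - v j))
        = (∑ j ∈ Finset.univ.erase i, x i j * w j)
          - ∑ j ∈ Finset.univ.erase i, x i j * v j by
          rw [← Finset.sum_sub_distrib]; apply Finset.sum_congr rfl; intros; ring]
      linarith
    funext i
    have := congrFun this i
    simp only [Pi.sub_apply, Pi.zero_apply] at this
    linarith
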